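/- Let H be a Banach space with bounded inner product h, and let A be a closed operator on H unitary with respect to h (h(Ax,Ay) = h(x,y) on dom A) such that A − I is a closed Fredholm operator of index 0. Then there is a neighbourhood N ⊆ ℂ of 1 such that σ(A) ∩ N ⊆ {1}, and 1 (if it is in the spectrum) is an isolated spectral point with finite and equal geometric and algebraic multiplicities. -/

import Mathlib

/-- Iterated kernels of `A - I` for an operator `A` with domain `D`:
`iterKer D A k` is the set of generalized eigenvectors of order `≤ k`
of `A` for the eigenvalue `1`. -/
def iterKer {H : Type*} [AddCommGroup H] [Module ℂ H]
    (D : Submodule ℂ H) (A : ↥D →ₗ[ℂ] H) : ℕ → Set H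
  | 0 => {0}
  | (k + 1) => {x : H | ∃ hx : x ∈ D, A ⟨x, hx⟩ - x ∈ iterKer D A k}

/-- Open-mapping bound for a closed bijective operator. -/
private lemma aux_bound {H : Type*} [NormedAddCommGroup H] [NormedSpace ℂ H] [CompleteSpace H]
    (D : Submodule ℂ H) (g : ↥D →ₗ[ℂ] H)
    (hG : IsClosed ((LinearMap.range ((D.subtype).prod g) : Submodule ℂ (H × H)) : Set (H × H)))
    (hinj : ∀ d : ↥D, g d = 0 → d = 0) (hsurj : ∀ y : H, ∃ d : ↥D, g d = y) :
    ∃ cr : ℝ, ∀ d : ↥D, ‖(d : H)‖ ≤ cr * ‖g d‖ := by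
  set Gm : Submodule ℂ (H × H) := LinearMap.range ((D.subtype).prod g) with hGmdef
  haveI : CompleteSpace ↥Gm := hG.completeSpace_coe
  set q2 : ↥Gm →L[ℂ] H :=
    { toFun := fun p => (p : H × H).2,
      map_add' := fun p q => rfl,
      map_smul' := fun a p => rfl,
      cont := continuous_snd.comp continuous_subtype_val } with hq2def
  have hq2inj : LinearMap.ker (q2 : ↥Gm →ₗ[ℂ] H) = ⊥ := by
    rw [LinearMap.ker_eq_bot']
    intro p hp
    obtain ⟨d, hd⟩ := p.2
    have h2 : g d = 0 := (congrArg Prod.snd hd).trans hp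
    have hd0 : d = 0 := hinj d h2
    have h1 : ((p : H × H)).1 = 0 := by
      rw [← congrArg Prod.fst hd, hd0]; simp
    exact Subtype.ext (Prod.ext h1 hp)
  have hq2surj : LinearMap.range (q2 : ↥Gm →ₗ[ℂ] H) = ⊤ := by
    rw [LinearMap.range_eq_top]
    intro y
    obtain ⟨d, hd⟩ := hsurj y
    exact ⟨⟨((d : H), y), ⟨d, Prod.ext rfl hd⟩⟩, rfl⟩
  set e2 := ContinuousLinearEquiv.ofBijective q2 hq2inj hq2surj with he2def
  refine ⟨‖(e2.symm : H →L[ℂ] ↥Gm)‖, ?_⟩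
  intro d
  set p : ↥Gm := ⟨((d : H), g d), ⟨d, rfl⟩⟩ with hpdef
  have he2p : e2 p = g d := rfl
  have hsymm : e2.symm (g d) = p := by
    rw [← he2p, e2.symm_apply_apply]
  calc ‖(d : H)‖ ≤ ‖(p : H × H)‖ := norm_fst_le (p : H × H)
  _ = ‖p‖ := rfl
  _ = ‖e2.symm (g d)‖ := by rw [hsymm]
  _ = ‖(e2.symm : H →L[ℂ] ↥Gm) (g d)‖ := rfl
  _ ≤ ‖(e2.symm : H →L[ℂ] ↥Gm)‖ * ‖g d‖ :=
    (e2.symm : H →L[ℂ] ↥Gm).le_opNorm _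

/-- A bounded right inverse on the range for a closed operator whose kernel and range
are algebraically complementary. -/
private lemma aux_inverse {H : Type*} [NormedAddCommGroup H] [NormedSpace ℂ H] [CompleteSpace H]
    (D : Submodule ℂ H) (T : ↥D →ₗ[ℂ] H)
    (hGT : IsClosed ((LinearMap.range ((D.subtype).prod T) : Submodule ℂ (H × H)) : Set (H × H)))
    (hranclosed : IsClosed ((LinearMap.range T : Submodule ℂ H) : Set H))
    (hKR : ∀ x : H, x ∈ (LinearMap.ker T).map D.subtype → x ∈ LinearMap.range T → x = 0)
    (hsum : ∀ y : H, ∃ k ∈ (LinearMap.ker T).map D.subtype, ∃ r ∈ LinearMap.range T, y = k + r) :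
    ∃ S : ↥(LinearMap.range T) →L[ℂ] ↥(LinearMap.range T),
      (∀ z : ↥(LinearMap.range T), ∃ d : ↥D, ((S z : H) = (d : H) ∧ T d = (z : H))) ∧
      (∀ x : ↥D, (x : H) ∈ LinearMap.range T → ‖(x : H)‖ ≤ ‖S‖ * ‖T x‖) := by
  set R : Submodule ℂ H := LinearMap.range T with hRdef
  set GR : Submodule ℂ (H × H) :=
    (LinearMap.range ((D.subtype).prod T)) ⊓ (R.prod ⊤) with hGRdef
  have hGRclosed : IsClosed (GR : Set (H × H)) := by
    rw [hGRdef]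
    have : ((((LinearMap.range ((D.subtype).prod T)) ⊓ (R.prod ⊤)) : Submodule ℂ (H×H)) : Set (H×H))
        = ((LinearMap.range ((D.subtype).prod T) : Submodule ℂ (H×H)) : Set (H×H)) ∩
          ((R : Set H) ×ˢ (Set.univ : Set H)) := by
      ext p
      simp [Submodule.mem_prod, Set.mem_prod]
    rw [this]
    exact hGT.inter (hranclosed.prod isClosed_univ)
  haveI : CompleteSpace ↥GR := hGRclosed.completeSpace_coe
  haveI : CompleteSpace ↥R := hranclosed.completeSpace_coe
  have hmem2 : ∀ p : ↥GR, (p : H × H).2 ∈ R := by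
    intro p
    obtain ⟨d, hd⟩ := p.2.1
    exact ⟨d, congrArg Prod.snd hd⟩
  set pr2 : ↥GR →L[ℂ] ↥R :=
    { toFun := fun p => ⟨(p : H × H).2, hmem2 p⟩,
      map_add' := fun p q => rfl,
      map_smul' := fun a p => rfl,
      cont := Continuous.subtype_mk (continuous_snd.comp continuous_subtype_val) hmem2 } with hpr2def
  have hpr2inj : LinearMap.ker (pr2 : ↥GR →ₗ[ℂ] ↥R) = ⊥ := by
    rw [LinearMap.ker_eq_bot']
    intro p hp
    have h2 : (p : H × H).2 = 0 := congrArg Subtype.val hp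
    obtain ⟨d, hd⟩ := p.2.1
    have hTd : T d = 0 := (congrArg Prod.snd hd).trans h2
    have h1K : (p : H × H).1 ∈ (LinearMap.ker T).map D.subtype := by
      refine ⟨d, hTd, ?_⟩
      exact congrArg Prod.fst hd
    have h1R : (p : H × H).1 ∈ R := (Submodule.mem_prod.mp p.2.2).1
    have h1 : (p : H × H).1 = 0 := hKR _ h1K h1R
    exact Subtype.ext (Prod.ext h1 h2)
  have hpr2surj : LinearMap.range (pr2 : ↥GR →ₗ[ℂ] ↥R) = ⊤ := by
    rw [LinearMap.range_eq_top]
    intro z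
    obtain ⟨d, hd⟩ := z.2
    obtain ⟨k, hk, r, hr, hdkr⟩ := hsum (d : H)
    obtain ⟨k₀, hk₀mem, hk₀⟩ := hk
    simp only [Submodule.subtype_apply] at hk₀
    set d' : ↥D := d - k₀ with hd'def
    have hd'1 : (d' : H) = r := by
      rw [hd'def]
      push_cast
      rw [hk₀, hdkr]; abel
    have hTd' : T d' = (z : H) := by
      rw [hd'def, map_sub, LinearMap.mem_ker.mp hk₀mem, sub_zero, hd]
    refine ⟨⟨((d' : H), T d'), ⟨⟨d', rfl⟩, ?_⟩⟩, ?_⟩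
    · exact Submodule.mem_prod.mpr ⟨by rw [hd'1]; exact hr, trivial⟩
    · exact Subtype.ext hTd'
  set eR := ContinuousLinearEquiv.ofBijective pr2 hpr2inj hpr2surj with heRdef
  have hmem1 : ∀ p : ↥GR, (p : H × H).1 ∈ R := fun p => (Submodule.mem_prod.mp p.2.2).1
  set pr1 : ↥GR →L[ℂ] ↥R :=
    { toFun := fun p => ⟨(p : H × H).1, hmem1 p⟩,
      map_add' := fun p q => rfl,
      map_smul' := fun a p => rfl,
      cont := Continuous.subtype_mk (continuous_fst.comp continuous_subtype_val) hmem1 } with hpr1def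
  set S : ↥R →L[ℂ] ↥R := pr1.comp (eR.symm : ↥R →L[ℂ] ↥GR) with hSdef
  have hP1 : ∀ z : ↥R, ∃ d : ↥D, ((S z : H) = (d : H) ∧ T d = (z : H)) := by
    intro z
    obtain ⟨d, hd⟩ := (eR.symm z).2.1
    refine ⟨d, ?_, ?_⟩
    · have : (S z : H) = ((eR.symm z : ↥GR) : H × H).1 := rfl
      rw [this, ← congrArg Prod.fst hd]
      rfl
    · have happ : pr2 (eR.symm z) = z := eR.apply_symm_apply z
      have : ((eR.symm z : ↥GR) : H × H).2 = (z : H) := congrArg Subtype.val happ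
      rw [← this, ← congrArg Prod.snd hd]
      rfl
  have hP2 : ∀ x : ↥D, (x : H) ∈ R → ‖(x : H)‖ ≤ ‖S‖ * ‖T x‖ := by
    intro x hx
    set z : ↥R := ⟨T x, ⟨x, rfl⟩⟩ with hzdef
    obtain ⟨d, hSz, hTd⟩ := hP1 z
    have hxd : (x : H) = (S z : H) := by
      have hker : x - d ∈ LinearMap.ker T := by
        rw [LinearMap.mem_ker, map_sub, hTd, hzdef, sub_self]
      have hK'mem : ((x - d : ↥D) : H) ∈ (LinearMap.ker T).map D.subtype := ⟨x - d, hker, rfl⟩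
      have hRmem : ((x - d : ↥D) : H) ∈ R := by
        push_cast
        refine sub_mem hx ?_
        rw [← hSz]; exact (S z).2
      have := hKR _ hK'mem hRmem
      push_cast at this
      rw [hSz, ← sub_eq_zero]
      exact this
    calc ‖(x : H)‖ = ‖S z‖ := by rw [hxd]; rfl
    _ ≤ ‖S‖ * ‖z‖ := S.le_opNorm z
    _ = ‖S‖ * ‖T x‖ := rfl
  exact ⟨S, hP1, hP2⟩


set_option maxHeartbeats 1600000 in
set_option synthInstance.maxHeartbeats 400000 in
/-- If `A` is a closed operator on a Banach space, unitary with respect to a bounded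
inner product `h`, and `A - I` is a closed Fredholm operator of index `0`, then there
is a neighbourhood `N` of `1` with `σ(A) ∩ N ⊆ {1}`, and the geometric and algebraic
multiplicities of the (possible) eigenvalue `1` are finite and coincide. -/
theorem h_unitary_spectrum_near_one
    {H : Type*} [NormedAddCommGroup H] [NormedSpace ℂ H] [CompleteSpace H]
    (h : H → H → ℂ)
    (hadd : ∀ x y z : H, h (x + y) z = h x z + h y z)
    (hsmul : ∀ (c : ℂ) (x y : H), h (c • x) y = c * h x y)
    (hherm : ∀ x y : H, h x y = (starRingEnd ℂ) (h y x))
    (hpos : ∀ x : H, x ≠ 0 → 0 < (h x x).re)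
    (c : ℝ) (hbound : ∀ x y : H, ‖h x y‖ ≤ c * ‖x‖ * ‖y‖)
    (D : Submodule ℂ H) (A : ↥D →ₗ[ℂ] H)
    (hclosed : IsClosed {p : H × H | ∃ d : ↥D, p.1 = (d : H) ∧ p.2 = A d})
    (hunitary : ∀ x y : ↥D, h (A x) (A y) = h (x : H) (y : H))
    -- `A - I` is a (closed) Fredholm operator of index 0:
    (hkerfin : FiniteDimensional ℂ ↥(LinearMap.ker (A - D.subtype)))
    (hranclosed : IsClosed ((LinearMap.range (A - D.subtype) : Submodule ℂ H) : Set H))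
    (hcokerfin : FiniteDimensional ℂ (H ⧸ LinearMap.range (A - D.subtype)))
    (hindex : Module.finrank ℂ ↥(LinearMap.ker (A - D.subtype))
      = Module.finrank ℂ (H ⧸ LinearMap.range (A - D.subtype))) :
    ∃ N : Set ℂ, IsOpen N ∧ (1 : ℂ) ∈ N ∧
      -- every point of N other than 1 is in the resolvent set of A:
      (∀ lam ∈ N, lam ≠ 1 →
        Function.Bijective (fun d : ↥D => A d - lam • (d : H)) ∧
        ∃ cr : ℝ, ∀ d : ↥D, ‖(d : H)‖ ≤ cr * ‖A d - lam • (d : H)‖) ∧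
      -- geometric and algebraic multiplicities of 1 coincide (both finite):
      (∀ k : ℕ, iterKer D A (k + 1) = iterKer D A 1) := by
  classical
  set T : ↥D →ₗ[ℂ] H := A - D.subtype with hTdef
  have hT : ∀ d : ↥D, T d = A d - (d : H) := fun d => rfl
  set K' : Submodule ℂ H := (LinearMap.ker T).map D.subtype with hK'def
  set R : Submodule ℂ H := LinearMap.range T with hRdef
  -- basic properties of h
  have h0 : ∀ y : H, h 0 y = 0 := by
    intro y
    have h1 : h 0 y + h 0 y = h 0 y := by rw [← hadd]; norm_num
    have := add_eq_left.mp h1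
    exact this
  have hsub2 : ∀ x a b : H, h x (a - b) = h x a - h x b := by
    intro x a b
    rw [hherm x (a - b), hherm x a, hherm x b]
    have : h (a - b) x + h b x = h a x := by rw [← hadd, sub_add_cancel]
    rw [eq_sub_of_add_eq this, map_sub]
  -- K' and R intersect trivially
  have hKR : ∀ x : H, x ∈ K' → x ∈ R → x = 0 := by
    intro x hxK hxR
    obtain ⟨k₀, hk₀, rfl⟩ := hxK
    obtain ⟨d, hd⟩ := hxR
    simp only [Submodule.subtype_apply] at hd ⊢
    by_contra hne
    have hpos' := hpos _ hne
    have hAk : A k₀ = (k₀ : H) := by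
      have h1 : T k₀ = 0 := LinearMap.mem_ker.mp hk₀
      rw [hT] at h1
      exact sub_eq_zero.mp h1
    have hxx : h (k₀:H) (k₀:H) = 0 := by
      have e1 : h (k₀:H) (A d) = h (k₀:H) (d:H) :=
        calc h (k₀:H) (A d) = (starRingEnd ℂ) (h (A d) (k₀:H)) := hherm _ _
        _ = (starRingEnd ℂ) (h (A d) (A k₀)) := by rw [hAk]
        _ = (starRingEnd ℂ) (h (d:H) (k₀:H)) := by rw [hunitary]
        _ = h (k₀:H) (d:H) := (hherm _ _).symm
      calc h (k₀:H) (k₀:H) = h (k₀:H) (T d) := by rw [hd]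
      _ = h (k₀:H) (A d) - h (k₀:H) (d:H) := by rw [hT, hsub2]
      _ = 0 := by rw [e1, sub_self]
    rw [hxx] at hpos'
    simp at hpos'
  -- K' + R = H
  have hsum : ∀ y : H, ∃ k ∈ K', ∃ r ∈ R, y = k + r := by
    have eK := (LinearMap.ker T).equivMapOfInjective D.subtype D.injective_subtype
    haveI hfinK' : FiniteDimensional ℂ ↥K' := Module.Finite.equiv eK
    have hrkK' : Module.finrank ℂ ↥K' = Module.finrank ℂ (H ⧸ R) := by
      rw [← LinearEquiv.finrank_eq eK]; exact hindex
    set φ : ↥K' →ₗ[ℂ] H ⧸ R := R.mkQ.comp K'.subtype with hφdef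
    have hφinj : Function.Injective φ := by
      rw [← LinearMap.ker_eq_bot, LinearMap.ker_eq_bot']
      intro m hm
      have hmem : (m : H) ∈ R := by
        have : R.mkQ (m : H) = 0 := hm
        rwa [Submodule.mkQ_apply, Submodule.Quotient.mk_eq_zero] at this
      exact Subtype.ext (hKR (m : H) m.2 hmem)
    have hφsurj : Function.Surjective φ :=
      (LinearMap.injective_iff_surjective_of_finrank_eq_finrank hrkK').mp hφinj
    intro y
    obtain ⟨x, hx⟩ := hφsurj (R.mkQ y)
    have hx' : R.mkQ (x : H) = R.mkQ y := hx
    have hyx : y - (x : H) ∈ R := by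
      have := (Submodule.Quotient.eq R).mp hx'
      simpa using neg_mem this
    exact ⟨(x : H), x.2, y - (x : H), hyx, by abel⟩
  -- closedness of shifted graphs
  have hGclosed : ∀ (lam : ℂ) (g : ↥D →ₗ[ℂ] H), (∀ d, g d = A d - lam • (d:H)) →
      IsClosed ((LinearMap.range ((D.subtype).prod g) : Submodule ℂ (H×H)) : Set (H×H)) := by
    intro lam g hg
    have hset : ((LinearMap.range ((D.subtype).prod g) : Submodule ℂ (H×H)) : Set (H×H))
        = (fun p : H × H => (p.1, p.2 + lam • p.1)) ⁻¹'
          {p : H × H | ∃ d : ↥D, p.1 = (d:H) ∧ p.2 = A d} := by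
      ext p
      constructor
      · rintro ⟨d, rfl⟩
        refine ⟨d, rfl, ?_⟩
        show g d + lam • ((d : H)) = A d
        rw [hg]; abel
      · rintro ⟨d, h1, h2⟩
        simp only at h1 h2
        refine ⟨d, ?_⟩
        have hp2 : p.2 = A d - lam • (d:H) := by
          rw [eq_sub_iff_add_eq, ← h1]; exact h2
        exact Prod.ext h1.symm (show g d = p.2 by rw [hg, hp2])
    rw [hset]
    exact hclosed.preimage (by fun_prop)
  have hGTclosed : IsClosed ((LinearMap.range ((D.subtype).prod T) : Submodule ℂ (H×H)) : Set (H×H)) := by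
    refine hGclosed 1 T ?_
    intro d; rw [hT, one_smul]
  haveI : CompleteSpace ↥R := hranclosed.completeSpace_coe
  obtain ⟨S, hP1, hP2⟩ := aux_inverse D T hGTclosed hranclosed hKR hsum
  -- the neighbourhood
  set CS : ℝ := ‖S‖ with hCSdef
  have hCS0 : 0 ≤ CS := by rw [hCSdef]; exact norm_nonneg S
  set δ : ℝ := (2 * (CS + 1))⁻¹ with hδdef
  have hδpos : 0 < δ := by positivity
  refine ⟨Metric.ball (1 : ℂ) δ, Metric.isOpen_ball, Metric.mem_ball_self hδpos, ?_, ?_⟩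
  · intro lam hlam hlam1
    set μ : ℂ := lam - 1 with hμdef
    have hμ0 : μ ≠ 0 := sub_ne_zero.mpr hlam1
    have hμn : ‖μ‖ < δ := by
      rw [hμdef, ← dist_eq_norm]
      exact Metric.mem_ball.mp hlam
    have hμCS : ‖μ‖ * CS < 1 := by
      have h1 : ‖μ‖ * (CS + 1) < δ * (CS + 1) := by
        apply mul_lt_mul_of_pos_right hμn; linarith
      have h2 : δ * (CS + 1) ≤ 1 / 2 := by
        rw [hδdef]
        rw [inv_mul_le_iff₀ (by positivity)]
        linarith
      nlinarith [norm_nonneg μ]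
    have hfT : ∀ d : ↥D, A d - lam • (d : H) = T d - μ • (d : H) := by
      intro d
      rw [hT, hμdef, sub_smul, one_smul]
      abel
    -- injectivity
    have hinj : ∀ d : ↥D, A d - lam • (d : H) = 0 → d = 0 := by
      intro d hd
      rw [hfT] at hd
      have hTd : T d = μ • (d : H) := by
        rw [← sub_eq_zero]; exact hd
      have hdR : (d : H) ∈ R := by
        have : (d : H) = μ⁻¹ • T d := by
          rw [hTd, smul_smul, inv_mul_cancel₀ hμ0, one_smul]
        rw [this]
        exact Submodule.smul_mem _ _ ⟨d, rfl⟩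
      have hb := hP2 d hdR
      rw [hTd, norm_smul] at hb
      have : ‖(d : H)‖ ≤ (‖μ‖ * CS) * ‖(d : H)‖ := by
        rw [hCSdef]; nlinarith [norm_nonneg (d : H)]
      have hd0 : ‖(d : H)‖ = 0 := by nlinarith [norm_nonneg (d : H)]
      have : (d : H) = 0 := norm_eq_zero.mp hd0
      exact Subtype.ext this
    -- surjectivity
    have hsurj : ∀ y : H, ∃ d : ↥D, A d - lam • (d : H) = y := by
      intro y
      obtain ⟨k, hk, r', hr', hy⟩ := hsum y
      obtain ⟨k₀, hk₀mem, hk₀⟩ := hk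
      simp only [Submodule.subtype_apply] at hk₀
      have hμS : ‖μ • S‖ < 1 := lt_of_le_of_lt (ContinuousLinearMap.opNorm_smul_le μ S) hμCS
      set u : (↥R →L[ℂ] ↥R)ˣ := Units.oneSub (μ • S) hμS with hudef
      set z : ↥R := (↑u⁻¹ : ↥R →L[ℂ] ↥R) ⟨r', hr'⟩ with hzdef
      have hz : z - μ • S z = (⟨r', hr'⟩ : ↥R) := by
        have h1 : ((↑u : ↥R →L[ℂ] ↥R) * (↑u⁻¹ : ↥R →L[ℂ] ↥R)) ⟨r', hr'⟩ = ⟨r', hr'⟩ := by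
          rw [u.mul_inv]; rfl
        have h2 : (↑u : ↥R →L[ℂ] ↥R) = 1 - μ • S := rfl
        rw [ContinuousLinearMap.mul_apply, h2, ← hzdef] at h1
        simpa using h1
      obtain ⟨d₁, hd₁, hTd₁⟩ := hP1 z
      refine ⟨(-μ⁻¹) • k₀ + d₁, ?_⟩
      rw [hfT]
      have hTd : T ((-μ⁻¹) • k₀ + d₁) = (z : H) := by
        rw [map_add, map_smul, LinearMap.mem_ker.mp hk₀mem, smul_zero, zero_add, hTd₁]
      have hcoe : (((-μ⁻¹) • k₀ + d₁ : ↥D) : H) = (-μ⁻¹) • k + (S z : H) := by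
        push_cast
        rw [hk₀, hd₁]
      rw [hTd, hcoe, smul_add, smul_smul]
      have hμμ : μ * -μ⁻¹ = -1 := by
        field_simp
      rw [hμμ]
      have hzz : (z : H) - μ • (S z : H) = r' := congrArg Subtype.val hz
      rw [hy]
      have hstep : (z:H) - ((-1 : ℂ) • k + μ • (S z : H)) = ((z:H) - μ • (S z : H)) + k := by
        simp only [neg_smul, one_smul]
        abel
      rw [hstep, hzz]
      abel
    refine ⟨?_, ?_⟩
    · constructor
      · intro a b hab
        simp only at hab
        have h0' : A (a - b) - lam • ((a - b : ↥D) : H) = 0 := by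
          rw [map_sub]
          push_cast
          have e : A a - A b - lam • ((a:H) - (b:H))
              = (A a - lam • (a:H)) - (A b - lam • (b:H)) := by
            rw [smul_sub]; abel
          rw [e, hab, sub_self]
        have := hinj _ h0'
        rwa [sub_eq_zero] at this
      · intro y
        obtain ⟨d, hd⟩ := hsurj y
        exact ⟨d, hd⟩
    -- the resolvent bound
    · set g : ↥D →ₗ[ℂ] H := A - lam • D.subtype with hgdef
      have hgapp : ∀ d : ↥D, g d = A d - lam • (d : H) := fun d => rfl
      have hinj' : ∀ d : ↥D, g d = 0 → d = 0 := by
        intro d hd; exact hinj d (by rw [← hgapp]; exact hd)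
      have hsurj' : ∀ y : H, ∃ d : ↥D, g d = y := by
        intro y; obtain ⟨d, hd⟩ := hsurj y; exact ⟨d, by rw [hgapp]; exact hd⟩
      obtain ⟨cr, hcr⟩ := aux_bound D g (hGclosed lam g hgapp) hinj' hsurj'
      exact ⟨cr, fun d => by have := hcr d; rwa [hgapp] at this⟩
  -- iterated kernels
  · have hzero : (0 : H) ∈ iterKer D A 1 := by
      refine ⟨D.zero_mem, ?_⟩
      show A ⟨0, D.zero_mem⟩ - 0 ∈ ({0} : Set H)
      have : (⟨0, D.zero_mem⟩ : ↥D) = 0 := rfl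
      rw [this, map_zero, sub_zero]
      rfl
    intro k
    induction k with
    | zero => rfl
    | succ k ih =>
      ext x
      show (∃ hx : x ∈ D, A ⟨x, hx⟩ - x ∈ iterKer D A (k + 1)) ↔ x ∈ iterKer D A 1
      rw [ih]
      constructor
      · rintro ⟨hx, hy⟩
        obtain ⟨hy', hTy⟩ := hy
        have hTy0 : T ⟨A ⟨x, hx⟩ - x, hy'⟩ = 0 := by
          rw [hT]
          have : A ⟨A ⟨x, hx⟩ - x, hy'⟩ - (A ⟨x, hx⟩ - x) ∈ ({0} : Set H) := hTy
          simpa using this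
        have hyK : A ⟨x, hx⟩ - x ∈ K' := ⟨⟨A ⟨x, hx⟩ - x, hy'⟩, hTy0, rfl⟩
        have hyR : A ⟨x, hx⟩ - x ∈ R := ⟨⟨x, hx⟩, by rw [hT]⟩
        have hy0 : A ⟨x, hx⟩ - x = 0 := hKR _ hyK hyR
        exact ⟨hx, by rw [hy0]; exact rfl⟩
      · rintro ⟨hx, hx0⟩
        have hx0' : A ⟨x, hx⟩ - x = 0 := hx0
        exact ⟨hx, by rw [hx0']; exact hzero⟩
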